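/- Let R > 0, let f : ℂ → ℂ be analytic and nonzero at every point of the open ball B(0,R) with f(0) = 1, let z ∈ B(0,R), let r be a real number with r > 1, and let S be a nonempty finite set of positive integers. Form the geometric sampling products with the common ratio r_k = r for every k ∈ S. Then both products below converge and P(f, S, z) = ∏_{n=|S|}^{∞} [ f( (∏_{k∈S} (r^k − 1)^{1/k}) · z / r^n ) ]^{C(n−1, |S|−1)}, where C(n−1, |S|−1) is the binomial coefficient, equal to the number of ways |S| positive integers can sum to n: consolidating all |S| exponents n_k into the single exponent n = Σ_{k∈S} n_k reduces the multi-index product to a product along a single geometric sequence with multiplicities. -/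

import Mathlib

open Finset

noncomputable def natSumEquivSym (ι : Type*) [Fintype ι] [DecidableEq ι] (n : ℕ) :
    {x : ι → ℕ // ∑ i, x i = n} ≃ Sym ι n :=
  Equiv.subtypeEquiv
    ((Finsupp.equivFunOnFinite).symm.trans Multiset.toFinsupp.symm.toEquiv)
    (fun x => by
      have hcard : Multiset.card
          ((Multiset.toFinsupp.symm : (ι →₀ ℕ) ≃+ Multiset ι) (Finsupp.equivFunOnFinite.symm x))
          = ∑ i, x i := by
        rw [show ((Multiset.toFinsupp.symm : (ι →₀ ℕ) ≃+ Multiset ι)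
            (Finsupp.equivFunOnFinite.symm x)) = Finsupp.toMultiset (Finsupp.equivFunOnFinite.symm x)
          from rfl]
        rw [Finsupp.card_toMultiset, Finsupp.sum_fintype]
        · rfl
        · intro; rfl
      simp only [Equiv.trans_apply]
      rw [show (Multiset.toFinsupp.symm.toEquiv (Finsupp.equivFunOnFinite.symm x) : Multiset ι)
        = Multiset.toFinsupp.symm (Finsupp.equivFunOnFinite.symm x) from rfl, hcard])

lemma card_pi_nat_sum (ι : Type*) [Fintype ι] [DecidableEq ι] (n : ℕ) :
    Nat.card {x : ι → ℕ // ∑ i, x i = n} = (Fintype.card ι + n - 1).choose n := by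
  rw [Nat.card_congr (natSumEquivSym ι n), Nat.card_eq_fintype_card, Sym.card_sym_eq_choose]

lemma pnat_sum_ge (ι : Type*) [Fintype ι] (x : ι → ℕ+) :
    Fintype.card ι ≤ ∑ i, (x i : ℕ) := by
  calc Fintype.card ι = ∑ _i : ι, 1 := by simp
    _ ≤ ∑ i, (x i : ℕ) := Finset.sum_le_sum (fun i _ => (x i).one_le)

lemma finite_pi_pnat_sum (ι : Type*) [Fintype ι] (n : ℕ) :
    Finite {x : ι → ℕ+ // ∑ i, (x i : ℕ) = n} := by
  apply Finite.of_injective (f := fun x : {x : ι → ℕ+ // ∑ i, (x i : ℕ) = n} =>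
    (fun i => (⟨(x.1 i : ℕ), by
      have h1 : (x.1 i : ℕ) ≤ ∑ j, (x.1 j : ℕ) :=
        Finset.single_le_sum (f := fun j => ((x.1 j : ℕ))) (fun j _ => Nat.zero_le _)
          (Finset.mem_univ i)
      have h2 := x.2
      omega⟩ : Fin (n+1))))
  intro x y h
  ext i
  have := congrFun h i
  simpa [Fin.ext_iff] using this

lemma card_pi_pnat_sum (ι : Type*) [Fintype ι] [DecidableEq ι] [Nonempty ι] {n : ℕ}
    (hn : 1 ≤ n) :
    Nat.card {x : ι → ℕ+ // ∑ i, (x i : ℕ) = n} = (n - 1).choose (Fintype.card ι - 1) := by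
  set m := Fintype.card ι with hm
  have hm1 : 1 ≤ m := Fintype.card_pos
  by_cases hnm : n < m
  · have : IsEmpty {x : ι → ℕ+ // ∑ i, (x i : ℕ) = n} := by
      constructor
      rintro ⟨x, hx⟩
      have := pnat_sum_ge ι x
      omega
    rw [Nat.card_of_isEmpty, eq_comm, Nat.choose_eq_zero_of_lt (by omega)]
  · push_neg at hnm
    have e : {x : ι → ℕ+ // ∑ i, (x i : ℕ) = n} ≃ {x : ι → ℕ // ∑ i, x i = n - m} := by
      refine ⟨fun x => ⟨fun i => (x.1 i : ℕ) - 1, ?_⟩,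
        fun y => ⟨fun i => ⟨y.1 i + 1, Nat.succ_pos _⟩, ?_⟩, ?_, ?_⟩
      · show ∑ i, ((x.1 i : ℕ) - 1) = n - m
        have e1 : ∑ i, ((x.1 i : ℕ) - 1 + 1) = ∑ i, (x.1 i : ℕ) :=
          Finset.sum_congr rfl (fun i _ => Nat.sub_add_cancel (x.1 i).one_le)
        have hx' : ∑ i, ((x.1 i : ℕ) - 1 + 1) = n := e1.trans x.2
        rw [Finset.sum_add_distrib, Finset.sum_const, Finset.card_univ, smul_eq_mul,
          mul_one] at hx'
        omega
      · show ∑ i, (y.1 i + 1) = n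
        rw [Finset.sum_add_distrib, Finset.sum_const, Finset.card_univ, smul_eq_mul,
          mul_one, y.2]
        omega
      · intro x
        apply Subtype.ext; funext i; apply PNat.coe_injective
        show (x.1 i : ℕ) - 1 + 1 = (x.1 i : ℕ)
        exact Nat.sub_add_cancel (x.1 i).one_le
      · intro y
        apply Subtype.ext; funext i
        show (y.1 i + 1) - 1 = y.1 i
        omega
    rw [Nat.card_congr e, card_pi_nat_sum]
    rw [show m + (n - m) - 1 = n - 1 by omega, show n - m = (n-1)-(m-1) by omega,
      Nat.choose_symm (by omega)]

open Complex

lemma log_linear_bound {f : ℂ → ℂ} (hf : AnalyticAt ℂ f 0) (hf0 : f 0 = 1) :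
    ∃ C ρ : ℝ, 0 < ρ ∧ 0 ≤ C ∧
      ∀ w : ℂ, ‖w‖ ≤ ρ → ‖Complex.log (f w)‖ ≤ C * ‖w‖ := by
  have hd : DifferentiableAt ℂ f 0 := hf.differentiableAt
  have hO : (fun w => f w - f 0) =O[nhds 0] (fun w => w - 0) := hd.isBigO_sub
  simp only [hf0, sub_zero] at hO
  obtain ⟨c, hc, hCO⟩ := hO.exists_pos
  rw [Asymptotics.isBigOWith_iff] at hCO
  rw [Metric.eventually_nhds_iff] at hCO
  obtain ⟨ε, hε, hball⟩ := hCO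
  refine ⟨3/2 * c, min (ε/2) (1/(2*c)), by positivity, by positivity, ?_⟩
  intro w hw
  have hwε : dist w 0 < ε := by
    rw [dist_zero_right]
    have := min_le_left (ε/2) (1/(2*c))
    nlinarith [le_trans hw this]
  have h1 : ‖f w - 1‖ ≤ c * ‖w‖ := by simpa using hball hwε
  have h2 : ‖f w - 1‖ ≤ 1/2 := by
    have hw2 : ‖w‖ ≤ 1/(2*c) := le_trans hw (min_le_right _ _)
    calc ‖f w - 1‖ ≤ c * (1/(2*c)) := le_trans h1 (by nlinarith)
      _ ≤ 1/2 := by rw [mul_one_div, div_le_div_iff₀ (by positivity) (by norm_num)]; nlinarith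
  have h3 : ‖Complex.log (1 + (f w - 1))‖ ≤ 3/2 * ‖f w - 1‖ :=
    norm_log_one_add_half_le_self h2
  rw [add_sub_cancel] at h3
  calc ‖Complex.log (f w)‖ ≤ 3/2 * ‖f w - 1‖ := h3
    _ ≤ 3/2 * (c * ‖w‖) := by nlinarith
    _ = 3/2 * c * ‖w‖ := by ring

lemma exists_geom_bound {r : ℝ} (hr : 1 < r) (u : ℕ → ℝ)
    (a C ρ : ℝ) (ha : 0 ≤ a) (hρ : 0 < ρ) (hC : 0 ≤ C)
    (h : ∀ n, a * (r⁻¹)^n ≤ ρ → u n ≤ C * (a * (r⁻¹)^n)) :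
    ∃ K, 0 ≤ K ∧ ∀ n, u n ≤ K * (r⁻¹)^n := by
  have hr0 : (0:ℝ) < r := lt_trans one_pos hr
  have hri : 0 < r⁻¹ := by positivity
  obtain ⟨N, hN⟩ := pow_unbounded_of_one_lt (a/ρ) hr
  have hKey : ∀ n, N ≤ n → a * (r⁻¹)^n ≤ ρ := by
    intro n hn
    have h1 : a < ρ * r^N := by
      rw [div_lt_iff₀ hρ] at hN; linarith [hN]
    have h2 : (r:ℝ)^N ≤ r^n := pow_le_pow_right₀ hr.le hn
    have h3 : (r⁻¹:ℝ)^n = (r^n)⁻¹ := by rw [inv_pow]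
    rw [h3, mul_inv_le_iff₀ (by positivity)]
    nlinarith
  refine ⟨max (C * a) (∑ j ∈ Finset.range N, |u j| * r^j), le_max_of_le_left (by positivity), ?_⟩
  intro n
  rcases le_or_gt N n with hn | hn
  · calc u n ≤ C * (a * (r⁻¹)^n) := h n (hKey n hn)
      _ = (C * a) * (r⁻¹)^n := by ring
      _ ≤ _ := by
        apply mul_le_mul_of_nonneg_right (le_max_left _ _) (by positivity)
  · have h1 : |u n| * r^n ≤ ∑ j ∈ Finset.range N, |u j| * r^j :=
      Finset.single_le_sum (f := fun j => |u j| * r^j)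
        (fun j _ => by positivity) (Finset.mem_range.mpr hn)
    have h2 : u n = (u n * r^n) * (r⁻¹)^n := by
      rw [inv_pow]; field_simp
    rw [h2]
    apply mul_le_mul_of_nonneg_right _ (by positivity)
    calc u n * r^n ≤ |u n| * r^n := by
          apply mul_le_mul_of_nonneg_right (le_abs_self _) (by positivity)
      _ ≤ ∑ j ∈ Finset.range N, |u j| * r^j := h1
      _ ≤ _ := le_max_right _ _

lemma summable_choose_geom {r : ℝ} (hr : 1 < r) (m : ℕ) (u : ℕ → ℝ) (hu0 : ∀ n, 0 ≤ u n)
    (K : ℝ) (hK : 0 ≤ K) (hb : ∀ n, u n ≤ K * (r⁻¹)^n) :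
    Summable (fun n : ℕ+ => ((((n:ℕ) - 1).choose (m - 1) : ℕ) : ℝ) * u n) := by
  have hr0 : (0:ℝ) < r := lt_trans one_pos hr
  have hri : (0:ℝ) < r⁻¹ := by positivity
  have hri1 : ‖(r⁻¹ : ℝ)‖ < 1 := by
    rw [Real.norm_eq_abs, abs_of_pos hri]
    rw [inv_lt_one_iff₀]; right; exact hr
  have hsum : Summable (fun n : ℕ => ((n:ℝ)^m * (r⁻¹)^n) * K) :=
    (summable_pow_mul_geometric_of_norm_lt_one m hri1).mul_right K
  have hsum2 : Summable (fun n : ℕ+ => (((n:ℕ):ℝ)^m * (r⁻¹)^(n:ℕ)) * K) := by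
    apply hsum.comp_injective (i := fun n : ℕ+ => (n : ℕ))
    exact fun a b h => PNat.coe_injective h
  apply Summable.of_nonneg_of_le _ _ hsum2
  · intro n; exact mul_nonneg (by positivity) (hu0 n)
  · intro n
    have hch : (((n:ℕ) - 1).choose (m - 1) : ℕ) ≤ (n:ℕ)^m := by
      calc (((n:ℕ) - 1).choose (m - 1) : ℕ) ≤ ((n:ℕ) - 1)^(m-1) := Nat.choose_le_pow _ _
        _ ≤ (n:ℕ)^(m-1) := Nat.pow_le_pow_left (Nat.sub_le _ _) _
        _ ≤ (n:ℕ)^m := Nat.pow_le_pow_right n.pos (Nat.sub_le _ _)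
    calc ((((n:ℕ) - 1).choose (m - 1) : ℕ) : ℝ) * u n
        ≤ ((n:ℕ):ℝ)^m * (K * (r⁻¹)^(n:ℕ)) := by
          apply mul_le_mul _ (hb n) (hu0 n) (by positivity)
          · rw [show (((n:ℕ):ℝ))^m = (((n:ℕ)^m : ℕ) : ℝ) by push_cast; ring]
            exact_mod_cast hch
      _ = (((n:ℕ):ℝ)^m * (r⁻¹)^(n:ℕ)) * K := by ring



/-- Geometric sampling point with real ratio `r > 1`:
`X_{k,n}(r) = (r^k - 1)^{1/k} / r^n`, positive real `k`-th root. -/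
noncomputable def Xr (k n : ℕ) (r : ℝ) : ℂ :=
  (((r ^ k - 1) ^ ((k : ℝ))⁻¹ : ℝ) : ℂ) / (r : ℂ) ^ n

/-- for `f` analytic and nonzero on `B(0,R)` with `f 0 = 1`, `z ∈ B(0,R)`,
a common real ratio `r > 1`, and a nonempty finite set `S` of positive integers, the
multi-index geometric sampling product `P(f, S, z)` and the consolidated single-sequence
product `∏_{n ≥ |S|} f((∏_{k∈S}(r^k-1)^{1/k}) z / r^n)^{C(n-1,|S|-1)}` both converge and
are equal.  (Indexing the latter by `n : ℕ+` is harmless: the binomial coefficient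
`C(n-1, |S|-1)` vanishes for `1 ≤ n < |S|`.) -/
theorem stmt_5 (R : ℝ) (hR : 0 < R) (f : ℂ → ℂ)
    (hf : ∀ w ∈ Metric.ball (0 : ℂ) R, AnalyticAt ℂ f w)
    (hfne : ∀ w ∈ Metric.ball (0 : ℂ) R, f w ≠ 0)
    (hf0 : f 0 = 1)
    (z : ℂ) (hz : z ∈ Metric.ball (0 : ℂ) R)
    (r : ℝ) (hr : 1 < r)
    (S : Finset ℕ) (hS : S.Nonempty) (h0 : 0 ∉ S) :
    Multipliable (fun ν : {x // x ∈ S} → ℕ+ =>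
      f ((∏ k : {x // x ∈ S}, Xr k.1 (ν k : ℕ) r) * z)) ∧
    Multipliable (fun n : ℕ+ =>
      (f ((((∏ k ∈ S, (r ^ k - 1) ^ ((k : ℝ))⁻¹ : ℝ)) : ℂ) * z / (r : ℂ) ^ (n : ℕ))) ^
        Nat.choose ((n : ℕ) - 1) (S.card - 1)) ∧
    (∏' ν : {x // x ∈ S} → ℕ+, f ((∏ k : {x // x ∈ S}, Xr k.1 (ν k : ℕ) r) * z)) =
    (∏' n : ℕ+,
      (f ((((∏ k ∈ S, (r ^ k - 1) ^ ((k : ℝ))⁻¹ : ℝ)) : ℂ) * z / (r : ℂ) ^ (n : ℕ))) ^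
        Nat.choose ((n : ℕ) - 1) (S.card - 1)) := by
  classical
  have hm1 : 1 ≤ S.card := hS.card_pos
  have hr0 : (0:ℝ) < r := lt_trans one_pos hr
  set m := S.card with hm
  set c : ℝ := ∏ k ∈ S, (r ^ k - 1) ^ ((k : ℝ))⁻¹ with hc
  have hkS : ∀ k ∈ S, 1 ≤ k := fun k hk =>
    Nat.one_le_iff_ne_zero.mpr (by rintro rfl; exact h0 hk)
  have hpow1 : ∀ k ∈ S, (1:ℝ) < r ^ k := by
    intro k hk
    exact one_lt_pow₀ hr (by have := hkS k hk; omega)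
  have hfac_pos : ∀ k ∈ S, 0 < (r ^ k - 1) ^ ((k : ℝ))⁻¹ := by
    intro k hk
    apply Real.rpow_pos_of_pos
    linarith [hpow1 k hk]
  have hcpos : 0 < c := Finset.prod_pos hfac_pos
  have hfac_le : ∀ k ∈ S, (r ^ k - 1) ^ ((k : ℝ))⁻¹ ≤ r := by
    intro k hk
    have h1 : (r^k - 1 : ℝ) ≤ r^k := by linarith
    have h0' : (0:ℝ) ≤ r^k - 1 := by linarith [hpow1 k hk]
    have hkne : ((k:ℝ)) ≠ 0 := Nat.cast_ne_zero.mpr (by have := hkS k hk; omega)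
    calc (r^k-1) ^ ((k : ℝ))⁻¹ ≤ (r^k) ^ ((k : ℝ))⁻¹ :=
          Real.rpow_le_rpow h0' h1 (by positivity)
      _ = r := by
          rw [← Real.rpow_natCast r k, ← Real.rpow_mul hr0.le,
            mul_inv_cancel₀ hkne, Real.rpow_one]
  have hcle : c ≤ r ^ m := by
    calc c ≤ ∏ _k ∈ S, r :=
          Finset.prod_le_prod (fun k hk => (hfac_pos k hk).le) hfac_le
      _ = r ^ m := by rw [Finset.prod_const]
  set w : ℕ → ℂ := fun n => ((c:ℝ):ℂ) * z / (r:ℂ)^n with hw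
  have hznorm : ‖z‖ < R := by simpa [Metric.mem_ball, dist_zero_right] using hz
  have hwnorm : ∀ n : ℕ, ‖w n‖ = (c * ‖z‖) * (r⁻¹)^n := by
    intro n
    rw [hw]
    simp only [norm_div, norm_mul, Complex.norm_real, norm_pow, Complex.norm_real,
      Real.norm_eq_abs, abs_of_pos hcpos]
    rw [abs_of_pos hr0, inv_pow, div_eq_mul_inv]
  have hwball : ∀ n : ℕ, m ≤ n → w n ∈ Metric.ball (0:ℂ) R := by
    intro n hn
    rw [Metric.mem_ball, dist_zero_right, hwnorm]
    have hrn : (0:ℝ) < r^n := by positivity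
    have h1 : c * (r⁻¹)^n ≤ 1 := by
      rw [inv_pow]
      rw [mul_inv_le_iff₀ hrn, one_mul]
      calc c ≤ r^m := hcle
        _ ≤ r^n := pow_le_pow_right₀ hr.le hn
    calc (c * ‖z‖) * (r⁻¹)^n = (c * (r⁻¹)^n) * ‖z‖ := by ring
      _ ≤ 1 * ‖z‖ := mul_le_mul_of_nonneg_right h1 (norm_nonneg z)
      _ = ‖z‖ := one_mul _
      _ < R := hznorm
  -- log points and bound
  set l : ℕ → ℂ := fun n => Complex.log (f (w n)) with hl
  obtain ⟨C, ρ, hρ, hC, hlog⟩ := log_linear_bound (hf 0 (Metric.mem_ball_self hR)) hf0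
  have hub : ∀ n : ℕ, (c * ‖z‖) * (r⁻¹)^n ≤ ρ → ‖l n‖ ≤ C * ((c * ‖z‖) * (r⁻¹)^n) := by
    intro n hn
    have h1 := hlog (w n) (by rw [hwnorm n]; exact hn)
    rw [hwnorm n] at h1
    exact h1
  obtain ⟨K, hK, hKb⟩ := exists_geom_bound hr (fun n => ‖l n‖) (c * ‖z‖) C ρ
    (by positivity) hρ hC hub
  have hsummn : Summable (fun n : ℕ+ => ((((n:ℕ) - 1).choose (m - 1) : ℕ) : ℝ) * ‖l (n:ℕ)‖) :=
    summable_choose_geom hr m (fun n => ‖l n‖) (fun n => norm_nonneg _) K hK hKb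
  -- sigma setup
  haveI hne : Nonempty {x // x ∈ S} := ⟨⟨hS.choose, hS.choose_spec⟩⟩
  have hcardS : Fintype.card {x // x ∈ S} = m := Fintype.card_coe S
  set σ : ({x // x ∈ S} → ℕ+) → ℕ+ := fun ν => ⟨∑ k, (ν k : ℕ), by
    have h1 := pnat_sum_ge {x // x ∈ S} ν
    rw [hcardS] at h1
    omega⟩ with hσ
  have hfibeq : ∀ (n : ℕ+) (ν : {x // x ∈ S} → ℕ+),
      (σ ν = n) ↔ (∑ k, (ν k : ℕ) = (n:ℕ)) := by
    intro n ν
    constructor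
    · intro h; exact congrArg (fun p : ℕ+ => (p : ℕ)) h
    · intro h; exact PNat.coe_injective h
  have hfinfib : ∀ n : ℕ+, Finite {ν : {x // x ∈ S} → ℕ+ // σ ν = n} := by
    intro n
    have h1 := finite_pi_pnat_sum {x // x ∈ S} (n:ℕ)
    exact Finite.of_equiv _ (Equiv.subtypeEquivRight (fun ν => (hfibeq n ν).symm))
  have hcardfib : ∀ n : ℕ+,
      Nat.card {ν : {x // x ∈ S} → ℕ+ // σ ν = n} = ((n:ℕ)-1).choose (m-1) := by
    intro n
    have h2 := card_pi_pnat_sum {x // x ∈ S} (n := (n:ℕ)) n.pos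
    rw [hcardS] at h2
    exact (Nat.card_congr (Equiv.subtypeEquivRight (fun ν => hfibeq n ν))).trans h2
  -- key product identity
  have hprod_eq : ∀ ν : {x // x ∈ S} → ℕ+,
      (∏ k : {x // x ∈ S}, Xr k.1 (ν k : ℕ) r) * z = w ((σ ν : ℕ)) := by
    intro ν
    have h1 : (∏ k : {x // x ∈ S}, Xr k.1 (ν k : ℕ) r)
        = ((c:ℝ):ℂ) / (r:ℂ)^(∑ k : {x // x ∈ S}, (ν k : ℕ)) := by
      unfold Xr
      rw [Finset.prod_div_distrib]
      congr 1
      · rw [hc, ← Finset.prod_coe_sort S (fun k => (r^k - 1) ^ ((k:ℝ))⁻¹),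
          Complex.ofReal_prod]
      · rw [Finset.prod_pow_eq_pow_sum]
    rw [h1, hw]
    show _ = ((c:ℝ):ℂ) * z / (r:ℂ)^((σ ν : ℕ))
    rw [hσ]
    show _ = ((c:ℝ):ℂ) * z / (r:ℂ)^(∑ k, (ν k : ℕ))
    ring
  have hσge : ∀ ν : {x // x ∈ S} → ℕ+, m ≤ (σ ν : ℕ) := by
    intro ν
    have h1 := pnat_sum_ge {x // x ∈ S} ν
    rw [hcardS] at h1
    exact h1
  have hfw_ne : ∀ n : ℕ, m ≤ n → f (w n) ≠ 0 := fun n hn => hfne _ (hwball n hn)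
  have hGeq : ∀ ν : {x // x ∈ S} → ℕ+,
      f ((∏ k : {x // x ∈ S}, Xr k.1 (ν k : ℕ) r) * z) = Complex.exp (l (σ ν : ℕ)) := by
    intro ν
    rw [hprod_eq ν, hl]
    exact (Complex.exp_log (hfw_ne _ (hσge ν))).symm
  -- Summability of logs over the pi type
  set e := Equiv.sigmaFiberEquiv σ with he
  have hLsum : Summable (fun ν : {x // x ∈ S} → ℕ+ => l (σ ν : ℕ)) := by
    rw [← e.summable_iff]
    apply Summable.of_norm
    have h2 : Summable (fun p : (Σ n : ℕ+, {ν : {x // x ∈ S} → ℕ+ // σ ν = n}) =>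
        ‖l (p.1 : ℕ)‖) := by
      rw [summable_sigma_of_nonneg (fun p => norm_nonneg _)]
      constructor
      · intro n
        haveI := hfinfib n
        exact Summable.of_finite
      · apply hsummn.congr
        intro n
        haveI := hfinfib n
        haveI := Fintype.ofFinite {ν : {x // x ∈ S} → ℕ+ // σ ν = n}
        rw [tsum_fintype]
        simp only [Finset.sum_const, Finset.card_univ, nsmul_eq_mul]
        rw [← Nat.card_eq_fintype_card, hcardfib n]
    apply h2.congr
    rintro ⟨n, ν, hν⟩
    show ‖l (n : ℕ)‖ = ‖l ((σ ν : ℕ))‖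
    rw [hν]
  have hProdG : HasProd (fun ν : {x // x ∈ S} → ℕ+ =>
      f ((∏ k : {x // x ∈ S}, Xr k.1 (ν k : ℕ) r) * z))
      (Complex.exp (∑' ν : {x // x ∈ S} → ℕ+, l (σ ν : ℕ))) := by
    have h1 := hLsum.hasSum.cexp
    have heq : (fun ν : {x // x ∈ S} → ℕ+ =>
        f ((∏ k : {x // x ∈ S}, Xr k.1 (ν k : ℕ) r) * z))
        = (Complex.exp ∘ fun ν : {x // x ∈ S} → ℕ+ => l (σ ν : ℕ)) := funext hGeq
    rw [heq]
    exact h1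
  set P := Complex.exp (∑' ν : {x // x ∈ S} → ℕ+, l (σ ν : ℕ)) with hP
  -- fiberwise
  have hfib : ∀ n : ℕ+, HasProd
      (fun νc : {ν : {x // x ∈ S} → ℕ+ // σ ν = n} =>
        f ((∏ k : {x // x ∈ S}, Xr k.1 (νc.1 k : ℕ) r) * z))
      ((f (w (n:ℕ))) ^ Nat.choose ((n:ℕ) - 1) (m - 1)) := by
    intro n
    haveI := hfinfib n
    haveI := Fintype.ofFinite {ν : {x // x ∈ S} → ℕ+ // σ ν = n}
    have hconst : (fun νc : {ν : {x // x ∈ S} → ℕ+ // σ ν = n} =>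
        f ((∏ k : {x // x ∈ S}, Xr k.1 (νc.1 k : ℕ) r) * z))
        = fun _ => f (w (n:ℕ)) := by
      funext νc
      rw [hprod_eq νc.1, νc.2]
    rw [hconst]
    have h1 := hasProd_fintype (fun _ : {ν : {x // x ∈ S} → ℕ+ // σ ν = n} => f (w (n:ℕ)))
    rwa [Finset.prod_const, Finset.card_univ, ← Nat.card_eq_fintype_card, hcardfib n] at h1
  have hsigma_total : HasProd (fun p : (Σ n : ℕ+, {ν : {x // x ∈ S} → ℕ+ // σ ν = n}) =>
      f ((∏ k : {x // x ∈ S}, Xr k.1 ((e p) k : ℕ) r) * z)) P :=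
    (Equiv.hasProd_iff e).mpr hProdG
  have hRHS : HasProd (fun n : ℕ+ => (f (w (n:ℕ))) ^ Nat.choose ((n:ℕ) - 1) (m - 1)) P :=
    hsigma_total.sigma (fun n => hfib n)
  refine ⟨⟨P, hProdG⟩, ⟨P, hRHS⟩, ?_⟩
  exact hProdG.tprod_eq.trans hRHS.tprod_eq.symm
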